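/- Let p be an odd prime and α a positive integer with α ≤ p - 3. Then in ℤ/p³ℤ, Σ_{p < l < 2p} 1/l^α = Σ_{0 < l < p} 1/l^α - α·p·Σ_{0 < l < p} 1/l^(α+1) + (α(α+1)/2)·p²·Σ_{0 < l < p} 1/l^(α+2), where all inverses are taken in ℤ/p³ℤ. -/

import Mathlib

lemma key_poly {R : Type*} [CommRing R] (q u : R) (hq : q ^ 3 = 0) :
    ∀ α : ℕ, (u + q) ^ α *
      (u ^ 2 - (α : R) * q * u + ((α * (α + 1) / 2 : ℕ) : R) * q ^ 2) = u ^ (α + 2)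
  | 0 => by simp
  | (n + 1) => by
    have hc : (n + 1) * (n + 1 + 1) / 2 = n * (n + 1) / 2 + (n + 1) := by
      have h2 : (n + 1) * (n + 1 + 1) = n * (n + 1) + 2 * (n + 1) := by ring
      have h3 : 2 ∣ n * (n + 1) := (Nat.even_mul_succ_self n).two_dvd
      omega
    set m := n * (n + 1) / 2 with hm
    have h' : (u + q) * (u ^ 2 - ((n + 1 : ℕ) : R) * q * u + ((m + (n + 1) : ℕ) : R) * q ^ 2)
        = u * (u ^ 2 - (n : R) * q * u + ((m : ℕ) : R) * q ^ 2) := by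
      push_cast
      linear_combination ((m : R) + (n : R) + 1) * hq
    calc (u + q) ^ (n + 1) *
          (u ^ 2 - ((n + 1 : ℕ) : R) * q * u + (((n + 1) * (n + 1 + 1) / 2 : ℕ) : R) * q ^ 2)
        = (u + q) ^ n * ((u + q) *
            (u ^ 2 - ((n + 1 : ℕ) : R) * q * u + ((m + (n + 1) : ℕ) : R) * q ^ 2)) := by
          rw [hc]; ring
      _ = u * ((u + q) ^ n * (u ^ 2 - (n : R) * q * u + ((m : ℕ) : R) * q ^ 2)) := by
          rw [h']; ring
      _ = u * u ^ (n + 2) := by rw [key_poly q u hq n]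
      _ = u ^ (n + 1 + 2) := by ring

lemma zmod_inv_eq {n : ℕ} (a b : ZMod n) (ha : IsUnit a) (h : a * b = 1) : a⁻¹ = b := by
  calc a⁻¹ = a⁻¹ * (a * b) := by rw [h, mul_one]
    _ = (a⁻¹ * a) * b := by ring
    _ = b := by rw [ZMod.inv_mul_of_unit a ha, one_mul]

theorem stmt11 (p α : ℕ) (hp : p.Prime) (hodd : Odd p) (hα : 1 ≤ α) (hαp : α ≤ p - 3) :
    (∑ l ∈ Finset.Ioo p (2 * p), ((l : ZMod (p ^ 3)) ^ α)⁻¹) =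
      (∑ l ∈ Finset.Ioo 0 p, ((l : ZMod (p ^ 3)) ^ α)⁻¹)
      - (α : ZMod (p ^ 3)) * p * (∑ l ∈ Finset.Ioo 0 p, ((l : ZMod (p ^ 3)) ^ (α + 1))⁻¹)
      + ((α * (α + 1) / 2 : ℕ) : ZMod (p ^ 3)) * (p : ZMod (p ^ 3)) ^ 2 *
          (∑ l ∈ Finset.Ioo 0 p, ((l : ZMod (p ^ 3)) ^ (α + 2))⁻¹) := by
  have hp3 : p ^ 3 ≠ 0 := pow_ne_zero _ hp.pos.ne'
  haveI : NeZero (p ^ 3) := ⟨hp3⟩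
  have hq3 : ((p : ZMod (p ^ 3))) ^ 3 = 0 := by
    have := ZMod.natCast_self (p ^ 3)
    push_cast at this
    exact this
  have hmap : Finset.Ioo p (2 * p) = (Finset.Ioo 0 p).map (addRightEmbedding p) := by
    rw [Finset.map_add_right_Ioo]
    congr 1 <;> omega
  rw [hmap, Finset.sum_map, Finset.mul_sum, Finset.mul_sum, ← Finset.sum_sub_distrib,
    ← Finset.sum_add_distrib]
  apply Finset.sum_congr rfl
  intro k hk
  simp only [addRightEmbedding_apply, Finset.mem_Ioo] at hk ⊢
  set u : ZMod (p ^ 3) := (k : ZMod (p ^ 3)) with hu_def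
  have hkco : Nat.Coprime k (p ^ 3) :=
    Nat.Coprime.pow_right _
      ((hp.coprime_iff_not_dvd.mpr (Nat.not_dvd_of_pos_of_lt hk.1 hk.2)).symm)
  have hkpco : Nat.Coprime (k + p) (p ^ 3) := by
    refine Nat.Coprime.pow_right _
      ((hp.coprime_iff_not_dvd.mpr ?_).symm)
    intro hdvd
    have : p ∣ k := (Nat.dvd_add_right (dvd_refl p)).mp (by rwa [Nat.add_comm] at hdvd)
    exact Nat.not_dvd_of_pos_of_lt hk.1 hk.2 this
  have hu : IsUnit u := (ZMod.isUnit_iff_coprime k (p ^ 3)).mpr hkco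
  have hup : IsUnit (u + (p : ZMod (p ^ 3))) := by
    have : ((k + p : ℕ) : ZMod (p ^ 3)) = u + (p : ZMod (p ^ 3)) := by push_cast; rfl
    exact this ▸ (ZMod.isUnit_iff_coprime (k + p) (p ^ 3)).mpr hkpco
  set q : ZMod (p ^ 3) := (p : ZMod (p ^ 3)) with hq_def
  set I : ZMod (p ^ 3) := (u ^ (α + 2))⁻¹ with hI_def
  have hIu : u ^ (α + 2) * I = 1 := ZMod.mul_inv_of_unit _ (hu.pow _)
  set C : ZMod (p ^ 3) := ((α * (α + 1) / 2 : ℕ) : ZMod (p ^ 3)) with hC_def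
  have h1 : ((u + q) ^ α)⁻¹ = (u ^ 2 - (α : ZMod (p ^ 3)) * q * u + C * q ^ 2) * I := by
    apply zmod_inv_eq _ _ (hup.pow _)
    rw [← mul_assoc, key_poly q u hq3 α, hIu]
  have h2 : (u ^ α)⁻¹ = u ^ 2 * I := by
    apply zmod_inv_eq _ _ (hu.pow _)
    rw [← mul_assoc, ← pow_add, hIu]
  have h3 : (u ^ (α + 1))⁻¹ = u * I := by
    apply zmod_inv_eq _ _ (hu.pow _)
    rw [← mul_assoc, ← pow_succ, hIu]
  have hcast : ((k + p : ℕ) : ZMod (p ^ 3)) = u + q := by push_cast; rfl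
  rw [hcast, h1, h2, h3]
  ring
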